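/- Suppose l_m ≤ l_n + c₁ for all positive integers m ≤ n (for some constant c₁ ≥ 0), and suppose K := sup_{n ≥ 1} sup_{h ∈ [0, l_n]} inf_{m ≥ 1} Γ_{nm}(h) is finite. Then for every positive integer n with l_{n+1} > 4(K + c₁), one has r_n ≤ 2·max{K, 1} + 2·log max{K, 1} + 3c₁. -/

import Mathlib

/-- For a real number `x`, its positive part `x₊ = max {x, 0}`. -/
noncomputable def ppart (x : ℝ) : ℝ := max x 0

/-- `Δ(k) = e^{-l_k} + e^{-l_{k+1}} + e^{-(1/2)(l_k + l_{k+1} - r_k)₊} + (r_k - l_k - l_{k+1})₊`. -/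
noncomputable def DeltaF (l r : ℕ → ℝ) (k : ℕ) : ℝ :=
  Real.exp (-l k) + Real.exp (-l (k + 1)) +
    Real.exp (-(1/2) * ppart (l k + l (k + 1) - r k)) + ppart (r k - l k - l (k + 1))

/-- The function `Γ_{nm}(h)` associated to the sequences `{l_n}` and `{r_n}`. -/
noncomputable def GammaF (l r : ℕ → ℝ) (n m : ℕ) (h : ℝ) : ℝ :=
  if m < n then
    (if l m ≤ h then
      ppart (r m + h - l (m + 1)) + Real.exp h * ∑ k ∈ Finset.Icc (m + 1) (n - 1), DeltaF l r k
    else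
      l m - h + Real.exp h * ∑ k ∈ Finset.Icc m (n - 1), DeltaF l r k)
  else if m = n then min h (l n - h)
  else
    (if l m ≤ h then
      ppart (r (m - 1) + h - l (m - 1)) + Real.exp h * ∑ k ∈ Finset.Icc n (m - 2), DeltaF l r k
    else
      l m - h + Real.exp h * ∑ k ∈ Finset.Icc n (m - 1), DeltaF l r k)

/-- `A_n(h)`: the largest positive integer `m < n` with `l_m ≤ h`, or `1` if there is none. -/
noncomputable def AFun (l : ℕ → ℝ) (n : ℕ) (h : ℝ) : ℕ :=
  sSup ({1} ∪ {m : ℕ | 1 ≤ m ∧ m < n ∧ l m ≤ h})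

/-- `B_n(h)`: the smallest integer `m > n` with `l_m ≤ h`, or `∞` if there is none. -/
noncomputable def BFun (l : ℕ → ℝ) (n : ℕ) (h : ℝ) : ℕ∞ :=
  sInf {x : ℕ∞ | ∃ m : ℕ, x = (m : ℕ∞) ∧ n < m ∧ l m ≤ h}

/-- `inf_{m ≥ 1} Γ_{nm}(h)`. -/
noncomputable def infGammaF (l r : ℕ → ℝ) (n : ℕ) (h : ℝ) : ℝ :=
  sInf {x : ℝ | ∃ m : ℕ, 1 ≤ m ∧ x = GammaF l r n m h}

/-- The set whose supremum is `K = sup_{n ≥ 1} sup_{h ∈ [0, l_n]} inf_{m ≥ 1} Γ_{nm}(h)`. -/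
def KSetF (l r : ℕ → ℝ) : Set ℝ :=
  {x : ℝ | ∃ n : ℕ, 1 ≤ n ∧ ∃ h : ℝ, 0 ≤ h ∧ h ≤ l n ∧ x = infGammaF l r n h}

lemma ppart_nonneg (x : ℝ) : 0 ≤ ppart x := le_max_right x 0

lemma deltaF_nonneg (l r : ℕ → ℝ) (k : ℕ) : 0 ≤ DeltaF l r k := by
  have h1 := (Real.exp_pos (-l k)).le
  have h2 := (Real.exp_pos (-l (k+1))).le
  have h3 := (Real.exp_pos (-(1/2) * ppart (l k + l (k + 1) - r k))).le
  have h4 := ppart_nonneg (r k - l k - l (k + 1))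
  unfold DeltaF
  linarith

lemma deltaF_sum_nonneg (l r : ℕ → ℝ) (s : Finset ℕ) : 0 ≤ ∑ k ∈ s, DeltaF l r k :=
  Finset.sum_nonneg fun k _ => deltaF_nonneg l r k

lemma gammaF_nonneg (l r : ℕ → ℝ) (n m : ℕ) (h : ℝ) (h0 : 0 ≤ h) (h1 : h ≤ l n) :
    0 ≤ GammaF l r n m h := by
  unfold GammaF
  split_ifs with h2 h3 h4 h5
  · have ha := ppart_nonneg (r m + h - l (m + 1))
    have hb := mul_nonneg (Real.exp_pos h).le (deltaF_sum_nonneg l r (Finset.Icc (m+1) (n-1)))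
    linarith
  · have ha : h < l m := not_le.mp h3
    have hb := mul_nonneg (Real.exp_pos h).le (deltaF_sum_nonneg l r (Finset.Icc m (n-1)))
    linarith
  · exact le_min h0 (by linarith)
  · have ha := ppart_nonneg (r (m-1) + h - l (m - 1))
    have hb := mul_nonneg (Real.exp_pos h).le (deltaF_sum_nonneg l r (Finset.Icc n (m-2)))
    linarith
  · have ha : h < l m := not_le.mp h5
    have hb := mul_nonneg (Real.exp_pos h).le (deltaF_sum_nonneg l r (Finset.Icc n (m-1)))
    linarith

lemma gammaF_lb (l r : ℕ → ℝ) (n m : ℕ) (h : ℝ) (hmn : m ≤ n)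
    (hex : ¬ (m = n ∧ l n ≤ h)) :
    Real.exp h * DeltaF l r n ≤ GammaF l r (n+1) m h := by
  have hlt : m < n + 1 := Nat.lt_succ_of_le hmn
  have hd : ∀ a : ℕ, a ≤ n → DeltaF l r n ≤ ∑ k ∈ Finset.Icc a n, DeltaF l r k :=
    fun a ha => Finset.single_le_sum (fun k _ => deltaF_nonneg l r k)
      (Finset.mem_Icc.2 ⟨ha, le_rfl⟩)
  unfold GammaF
  rw [if_pos hlt]
  simp only [Nat.add_sub_cancel]
  split_ifs with hle
  · have hmn' : m + 1 ≤ n := by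
      rcases lt_or_eq_of_le hmn with h' | h'
      · omega
      · exact absurd ⟨h', h' ▸ hle⟩ hex
    have hs := mul_le_mul_of_nonneg_left (hd (m+1) hmn') (Real.exp_pos h).le
    have hp := ppart_nonneg (r m + h - l (m + 1))
    linarith
  · have ha : h < l m := not_le.mp hle
    have hs := mul_le_mul_of_nonneg_left (hd m hmn) (Real.exp_pos h).le
    linarith

lemma deltaF_lb (l r : ℕ → ℝ) (k : ℕ) :
    Real.exp (-(1/2) * ppart (l k + l (k + 1) - r k)) ≤ DeltaF l r k := by
  have h1 := (Real.exp_pos (-l k)).le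
  have h2 := (Real.exp_pos (-l (k+1))).le
  have h4 := ppart_nonneg (r k - l k - l (k + 1))
  unfold DeltaF
  linarith

/-- Suppose `l_m ≤ l_n + c₁` for all positive integers `m ≤ n` (with `c₁ ≥ 0`), and suppose
`K := sup_{n ≥ 1} sup_{h ∈ [0, l_n]} inf_{m ≥ 1} Γ_{nm}(h)` is finite. Then for every
positive integer `n` with `l_{n+1} > 4(K + c₁)`, one has
`r_n ≤ 2 max {K, 1} + 2 log (max {K, 1}) + 3 c₁`. -/
theorem stmt12 (l r : ℕ → ℝ) (hl : ∀ n : ℕ, 1 ≤ n → 0 < l n)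
    (hr : ∀ n : ℕ, 1 ≤ n → 0 ≤ r n) (c₁ : ℝ) (hc₁ : 0 ≤ c₁)
    (hmono : ∀ m n : ℕ, 1 ≤ m → m ≤ n → l m ≤ l n + c₁)
    (hbdd : BddAbove (KSetF l r))
    (n : ℕ) (hn : 1 ≤ n) (hln : 4 * (sSup (KSetF l r) + c₁) < l (n + 1)) :
    r n ≤ 2 * max (sSup (KSetF l r)) 1 + 2 * Real.log (max (sSup (KSetF l r)) 1) + 3 * c₁ := by
  set K := sSup (KSetF l r) with hKdef
  have hSne : ∀ (n' : ℕ) (h : ℝ),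
      Set.Nonempty {x : ℝ | ∃ m : ℕ, 1 ≤ m ∧ x = GammaF l r n' m h} :=
    fun n' h => ⟨GammaF l r n' 1 h, 1, le_refl 1, rfl⟩
  have hK0 : 0 ≤ K := by
    have hmem : infGammaF l r n 0 ∈ KSetF l r := ⟨n, hn, 0, le_refl 0, (hl n hn).le, rfl⟩
    have h1 : (0:ℝ) ≤ infGammaF l r n 0 := by
      apply le_csInf (hSne n 0)
      rintro x ⟨m, hm, rfl⟩
      exact gammaF_nonneg l r n m 0 le_rfl (hl n hn).le
    exact h1.trans (le_csSup hbdd hmem)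
  set M := max K 1 with hMdef
  have hM1 : 1 ≤ M := le_max_right _ _
  have hMK : M ≤ K + 1 := max_le (by linarith) (by linarith)
  have hKM : K ≤ M := le_max_left _ _
  have hlogM : Real.log M ≤ K := by
    have := Real.log_le_sub_one_of_pos (show (0:ℝ) < M by linarith)
    linarith
  have hlogM0 : 0 ≤ Real.log M := Real.log_nonneg hM1
  apply le_of_forall_pos_le_add
  intro ε hε
  set g := l (n+1) - 2*K - c₁ with hgdef
  have hg0 : 0 < g := by simp only [hgdef]; linarith
  set t := min (ε/6) (g/6) with htdef
  have ht0 : 0 < t := lt_min (by linarith) (by linarith)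
  have ht1 : 6*t ≤ ε := by
    have := min_le_left (ε/6) (g/6); linarith
  have ht2 : t ≤ g/6 := min_le_right _ _
  set h := l (n+1) - c₁ - K - 2*t with hhdef
  have hhg : h = g + K - 2*t := by rw [hhdef, hgdef]; ring
  have hh0 : 0 ≤ h := by rw [hhg]; linarith
  have hhK : K + t < h := by rw [hhg]; linarith
  have hhl : h ≤ l (n+1) := by rw [hhdef]; linarith
  have hmem : infGammaF l r (n+1) h ∈ KSetF l r :=
    ⟨n+1, Nat.le_add_left 1 n, h, hh0, hhl, rfl⟩
  have hinf : infGammaF l r (n+1) h ≤ K := le_csSup hbdd hmem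
  have hinf' : sInf {x : ℝ | ∃ m : ℕ, 1 ≤ m ∧ x = GammaF l r (n+1) m h} < K + t := by
    have : infGammaF l r (n+1) h < K + t := by linarith
    simpa only [infGammaF] using this
  obtain ⟨x, ⟨m, hm1, rfl⟩, hx⟩ := exists_lt_of_csInf_lt (hSne (n+1) h) hinf'
  rcases lt_trichotomy m (n+1) with hmlt | hmeq | hmgt
  · -- m ≤ n
    have hmn : m ≤ n := Nat.lt_succ_iff.mp hmlt
    by_cases hcase : m = n ∧ l n ≤ h
    · obtain ⟨rfl, hln2⟩ := hcase
      have hEmpty : Finset.Icc (m+1) (m+1-1) = (∅ : Finset ℕ) := by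
        apply Finset.Icc_eq_empty; omega
      have hGeq : GammaF l r (m+1) m h = ppart (r m + h - l (m+1)) := by
        unfold GammaF
        rw [if_pos (Nat.lt_succ_self m), if_pos hln2, hEmpty]
        simp
      rw [hGeq] at hx
      have hple : r m + h - l (m + 1) ≤ ppart (r m + h - l (m + 1)) := le_max_left _ _
      have : r m < K + t + l (m+1) - h := by linarith
      rw [hhdef] at this
      linarith
    · have hlb := gammaF_lb l r n m h hmn hcase
      set p := ppart (l n + l (n + 1) - r n) with hpdef
      have hdl := deltaF_lb l r n
      have hexp : Real.exp (h + (-(1/2) * p)) < M + t := by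
        rw [Real.exp_add]
        have := mul_le_mul_of_nonneg_left hdl (Real.exp_pos h).le
        calc Real.exp h * Real.exp (-(1/2) * p) ≤ Real.exp h * DeltaF l r n := this
          _ ≤ GammaF l r (n+1) m h := hlb
          _ < K + t := hx
          _ ≤ M + t := by linarith
      have hlog : h + (-(1/2) * p) ≤ Real.log (M + t) :=
        (Real.le_log_iff_exp_le (by linarith)).mpr hexp.le
      have hlogMt : Real.log (M + t) ≤ Real.log M + t := by
        have hMpos : (0:ℝ) < M := by linarith
        have hMtpos : (0:ℝ) < M + t := by linarith
        have h1 : Real.log ((M+t)/M) ≤ (M+t)/M - 1 :=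
          Real.log_le_sub_one_of_pos (by positivity)
        have h2 : Real.log ((M+t)/M) = Real.log (M+t) - Real.log M :=
          Real.log_div (ne_of_gt hMtpos) (ne_of_gt hMpos)
        have h3 : (M+t)/M - 1 = t/M := by field_simp; ring
        have h4 : t/M ≤ t := div_le_self ht0.le hM1
        rw [h2, h3] at h1
        linarith
      have hp2 : 2*(h - Real.log M - t) ≤ p := by linarith
      have hppos : 0 < p := by
        have : h - Real.log M - t ≥ g - 3*t := by rw [hhg]; linarith
        have : 0 < h - Real.log M - t := by linarith
        linarith
      have hps : p = l n + l (n + 1) - r n := by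
        rcases le_or_gt (l n + l (n + 1) - r n) 0 with h' | h'
        · exfalso
          have : p = 0 := by rw [hpdef]; unfold ppart; exact max_eq_right h'
          linarith
        · rw [hpdef]; unfold ppart; exact max_eq_left h'.le
      have hlnle : l n ≤ l (n+1) + c₁ := hmono n (n+1) hn (Nat.le_succ n)
      rw [hps] at hp2
      rw [hhdef] at hp2
      linarith
  · -- m = n + 1
    have hGeq : GammaF l r (n+1) m h = min h (l (n+1) - h) := by
      unfold GammaF
      rw [hmeq, if_neg (lt_irrefl (n+1)), if_pos rfl]
    rw [hGeq] at hx
    have h1 : K + t < l (n+1) - h := by rw [hhdef]; linarith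
    have := lt_min hhK h1
    linarith
  · -- m > n + 1
    have hmono1 : l (n+1) ≤ l m + c₁ := hmono (n+1) m (Nat.le_add_left 1 n) hmgt.le
    unfold GammaF at hx
    rw [if_neg (by omega : ¬ m < n+1), if_neg (by omega : ¬ m = n+1)] at hx
    split_ifs at hx with hle
    · rw [hhdef] at hle; linarith
    · have ha : h < l m := not_le.mp hle
      have hb := mul_nonneg (Real.exp_pos h).le (deltaF_sum_nonneg l r (Finset.Icc (n+1) (m-1)))
      rw [hhdef] at ha
      linarith
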